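/- Let (M, d) be a compact metric space, μ a Borel probability measure on M, and λ > 1. Then there exists a sequence P_1 ≤ P_2 ≤ ⋯ of finite partitions of M into Borel sets, each refining the previous one, such that: (i) every atom of every P_n is (λ, μ)-regular; and (ii) every atom of P_n has diameter at most 2^{-n}. Consequently the partitions P_n jointly separate points of M, i.e. ⋁_{n≥1} P_n is the partition of M into points. -/

import Mathlib

open MeasureTheory

/-- A Borel set `A` is `(λ, μ)`-regular if `∑_{n ≥ 1} μ (∂_{λ^{-n}} A) < ∞`, where
`∂_ρ A` is the open `ρ`-neighborhood of the topological frontier of `A`. -/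
def LambdaMuRegular {M : Type*} [MetricSpace M] [MeasurableSpace M]
    (μ : Measure M) (lam : ℝ) (A : Set M) : Prop :=
  ∑' n : ℕ, μ (Metric.thickening (lam ^ (-((n : ℤ) + 1))) (frontier A)) < ⊤

section Helpers

open Metric Set
open scoped ENNReal

variable {M : Type*} [MetricSpace M] [MeasurableSpace M] {μ : Measure M} {lam : ℝ}



lemma reg_of_frontier_subset {A B : Set M} (h : frontier A ⊆ frontier B)
    (hB : LambdaMuRegular μ lam B) : LambdaMuRegular μ lam A :=
  lt_of_le_of_lt (ENNReal.tsum_le_tsum fun _ =>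
    measure_mono (thickening_subset_of_subset _ h)) hB

lemma reg_of_frontier_subset_union {A B C : Set M}
    (h : frontier A ⊆ frontier B ∪ frontier C)
    (hB : LambdaMuRegular μ lam B) (hC : LambdaMuRegular μ lam C) :
    LambdaMuRegular μ lam A := by
  have key : ∀ n : ℕ, μ (thickening (lam ^ (-((n : ℤ) + 1))) (frontier A)) ≤
      μ (thickening (lam ^ (-((n : ℤ) + 1))) (frontier B)) +
      μ (thickening (lam ^ (-((n : ℤ) + 1))) (frontier C)) := by
    intro n
    calc μ (thickening (lam ^ (-((n : ℤ) + 1))) (frontier A))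
        ≤ μ (thickening (lam ^ (-((n : ℤ) + 1))) (frontier B ∪ frontier C)) :=
          measure_mono (thickening_subset_of_subset _ h)
      _ = μ (thickening (lam ^ (-((n : ℤ) + 1))) (frontier B) ∪
            thickening (lam ^ (-((n : ℤ) + 1))) (frontier C)) := by
          rw [thickening_union]
      _ ≤ _ := measure_union_le _ _
  calc (∑' n : ℕ, μ (thickening (lam ^ (-((n : ℤ) + 1))) (frontier A)))
      ≤ ∑' n : ℕ, (μ (thickening (lam ^ (-((n : ℤ) + 1))) (frontier B)) +
          μ (thickening (lam ^ (-((n : ℤ) + 1))) (frontier C))) :=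
        ENNReal.tsum_le_tsum key
    _ = _ + _ := ENNReal.tsum_add
    _ < ⊤ := ENNReal.add_lt_top.2 ⟨hB, hC⟩

lemma reg_empty : LambdaMuRegular μ lam (∅ : Set M) := by
  simp [LambdaMuRegular, frontier_empty]

lemma reg_inter {A B : Set M} (hA : LambdaMuRegular μ lam A)
    (hB : LambdaMuRegular μ lam B) : LambdaMuRegular μ lam (A ∩ B) :=
  reg_of_frontier_subset_union
    ((frontier_inter_subset A B).trans
      (Set.union_subset_union Set.inter_subset_left Set.inter_subset_right)) hA hB

lemma reg_union {A B : Set M} (hA : LambdaMuRegular μ lam A)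
    (hB : LambdaMuRegular μ lam B) : LambdaMuRegular μ lam (A ∪ B) :=
  reg_of_frontier_subset_union
    ((frontier_union_subset A B).trans
      (Set.union_subset_union Set.inter_subset_left Set.inter_subset_right)) hA hB

lemma reg_compl {A : Set M} (hA : LambdaMuRegular μ lam A) :
    LambdaMuRegular μ lam Aᶜ :=
  reg_of_frontier_subset (frontier_compl A).subset hA

lemma reg_diff {A B : Set M} (hA : LambdaMuRegular μ lam A)
    (hB : LambdaMuRegular μ lam B) : LambdaMuRegular μ lam (A \ B) :=
  Set.diff_eq A B ▸ reg_inter hA (reg_compl hB)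

end Helpers

section Construction

open Metric Set
open scoped ENNReal

variable {M : Type*} [MetricSpace M] [CompactSpace M] [MeasurableSpace M] [BorelSpace M]

lemma exists_good_radius {M : Type*} [MetricSpace M] [CompactSpace M] [MeasurableSpace M]
    [BorelSpace M] (μ : Measure M) [IsProbabilityMeasure μ] {lam : ℝ}
    (hlam : 1 < lam) (x : M) {a b : ℝ} (hab : a < b) :
    ∃ r ∈ Set.Ioo a b, LambdaMuRegular μ lam (Metric.ball x r) := by
  have hlam0 : 0 < lam := lt_trans one_pos hlam
  set ρ : ℕ → ℝ := fun n => lam ^ (-((n : ℤ) + 1)) with hρdef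
  have hρpos : ∀ n, 0 < ρ n := fun n => zpow_pos hlam0 _
  set A : ℕ → Set (ℝ × M) := fun n => {p | |dist p.2 x - p.1| < ρ n} with hAdef
  have hAopen : ∀ n, IsOpen (A n) := by
    intro n
    have hc : Continuous fun p : ℝ × M => |dist p.2 x - p.1| :=
      ((continuous_snd.dist continuous_const).sub continuous_fst).abs
    exact isOpen_lt hc continuous_const
  have hAmeas : ∀ n, MeasurableSet (A n) := fun n => (hAopen n).measurableSet
  set F : ℝ → ℝ≥0∞ := fun r => ∑' n, μ (Prod.mk r ⁻¹' A n) with hFdef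
  -- single annulus integral bound
  have key : ∀ n, ∫⁻ r in Set.Ioo a b, μ (Prod.mk r ⁻¹' A n) ≤ ENNReal.ofReal (2 * ρ n) := by
    intro n
    have h1 : ∀ r : ℝ, μ (Prod.mk r ⁻¹' A n)
        = ∫⁻ y, Set.indicator (A n) (fun _ => (1 : ℝ≥0∞)) (r, y) ∂μ := by
      intro r
      have hfun : ∀ y : M, Set.indicator (A n) (fun _ => (1 : ℝ≥0∞)) (r, y)
          = Set.indicator (Prod.mk r ⁻¹' A n) (fun _ => (1 : ℝ≥0∞)) y := by
        intro y
        by_cases h : (r, y) ∈ A n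
        · rw [Set.indicator_of_mem h, Set.indicator_of_mem (Set.mem_preimage.mpr h)]
        · rw [Set.indicator_of_notMem h,
            Set.indicator_of_notMem (fun hh => h (Set.mem_preimage.mp hh))]
      simp only [hfun]
      exact (lintegral_indicator_one (measurable_prodMk_left (hAmeas n))).symm
    have h2 : ∫⁻ r in Set.Ioo a b, (∫⁻ y, Set.indicator (A n) (fun _ => (1 : ℝ≥0∞)) (r, y) ∂μ)
        = ∫⁻ y, (∫⁻ r in Set.Ioo a b, Set.indicator (A n) (fun _ => (1 : ℝ≥0∞)) (r, y)) ∂μ := by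
      apply lintegral_lintegral_swap
      exact ((measurable_const.indicator (hAmeas n)).aemeasurable)
    have h3 : ∀ y : M, ∫⁻ r in Set.Ioo a b, Set.indicator (A n) (fun _ => (1 : ℝ≥0∞)) (r, y)
        ≤ ENNReal.ofReal (2 * ρ n) := by
      intro y
      have hset : ∀ r : ℝ, Set.indicator (A n) (fun _ => (1 : ℝ≥0∞)) (r, y)
          = Set.indicator (Set.Ioo (dist y x - ρ n) (dist y x + ρ n)) (fun _ => (1 : ℝ≥0∞)) r := by
        intro r
        have : (r, y) ∈ A n ↔ r ∈ Set.Ioo (dist y x - ρ n) (dist y x + ρ n) := by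
          simp only [hAdef, Set.mem_setOf_eq, Set.mem_Ioo, abs_sub_lt_iff]
          constructor <;> intro h <;> constructor <;> linarith [h.1, h.2]
        by_cases h : (r, y) ∈ A n
        · rw [Set.indicator_of_mem h, Set.indicator_of_mem (this.mp h)]
        · rw [Set.indicator_of_notMem h,
            Set.indicator_of_notMem (fun hh => h (this.mpr hh))]
      calc ∫⁻ r in Set.Ioo a b, Set.indicator (A n) (fun _ => (1 : ℝ≥0∞)) (r, y)
          = ∫⁻ r in Set.Ioo a b,
            Set.indicator (Set.Ioo (dist y x - ρ n) (dist y x + ρ n)) (fun _ => (1 : ℝ≥0∞)) r := by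
            simp only [hset]
        _ = (volume.restrict (Set.Ioo a b)) (Set.Ioo (dist y x - ρ n) (dist y x + ρ n)) :=
            lintegral_indicator_one measurableSet_Ioo
        _ ≤ volume (Set.Ioo (dist y x - ρ n) (dist y x + ρ n)) :=
            Measure.restrict_apply_le _ _
        _ = ENNReal.ofReal (2 * ρ n) := by
            rw [Real.volume_Ioo]; congr 1; ring
    calc ∫⁻ r in Set.Ioo a b, μ (Prod.mk r ⁻¹' A n)
        = ∫⁻ r in Set.Ioo a b, (∫⁻ y, Set.indicator (A n) (fun _ => (1 : ℝ≥0∞)) (r, y) ∂μ) := by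
          simp only [h1]
      _ = ∫⁻ y, (∫⁻ r in Set.Ioo a b, Set.indicator (A n) (fun _ => (1 : ℝ≥0∞)) (r, y)) ∂μ := h2
      _ ≤ ∫⁻ _, ENNReal.ofReal (2 * ρ n) ∂μ := lintegral_mono h3
      _ = ENNReal.ofReal (2 * ρ n) := by simp
  -- summability of the bounds
  have hsum : Summable fun n : ℕ => 2 * ρ n := by
    have : ∀ n : ℕ, ρ n = lam⁻¹ * (lam⁻¹) ^ n := by
      intro n
      show lam ^ (-((n : ℤ) + 1)) = lam⁻¹ * lam⁻¹ ^ n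
      rw [show -((n : ℤ) + 1) = -(((n + 1 : ℕ) : ℤ)) by push_cast; ring,
        zpow_neg, zpow_natCast, ← inv_pow, pow_succ']
    simp only [this]
    exact (((summable_geometric_of_lt_one (by positivity)
      (inv_lt_one_of_one_lt₀ hlam)).mul_left _).mul_left _)
  have htot : ∫⁻ r in Set.Ioo a b, F r ≤ ENNReal.ofReal (∑' n, 2 * ρ n) := by
    rw [hFdef]
    rw [lintegral_tsum (fun n => (measurable_measure_prodMk_left (hAmeas n)).aemeasurable)]
    rw [ENNReal.ofReal_tsum_of_nonneg (fun n => by positivity) hsum]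
    exact ENNReal.tsum_le_tsum key
  -- extract a good radius
  have hFmeas : Measurable F :=
    Measurable.ennreal_tsum fun n => measurable_measure_prodMk_left (hAmeas n)
  have hexists : ∃ r ∈ Set.Ioo a b, F r < ⊤ := by
    by_contra h
    push_neg at h
    have hvol : volume (Set.Ioo a b) ≠ 0 := by
      rw [Real.volume_Ioo]
      exact (ENNReal.ofReal_pos.mpr (by linarith)).ne'
    have hge : (⊤ : ℝ≥0∞) ≤ ∫⁻ r in Set.Ioo a b, F r := by
      have h2 : ∫⁻ _ in Set.Ioo a b, (⊤ : ℝ≥0∞) ≤ ∫⁻ r in Set.Ioo a b, F r :=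
        setLIntegral_mono hFmeas (fun r hr => h r hr)
      rwa [setLIntegral_const, ENNReal.top_mul hvol] at h2
    exact (lt_irrefl (⊤ : ℝ≥0∞))
      (lt_of_le_of_lt (hge.trans htot) ENNReal.ofReal_lt_top)
  obtain ⟨r, hr, hFr⟩ := hexists
  refine ⟨r, hr, ?_⟩
  have hsub : ∀ n : ℕ, Metric.thickening (ρ n) (frontier (Metric.ball x r))
      ⊆ Prod.mk r ⁻¹' A n := by
    intro n y hy
    rw [Metric.mem_thickening_iff] at hy
    obtain ⟨z, hz, hdz⟩ := hy
    have hzs : dist z x = r := frontier_ball_subset_sphere hz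
    have : |dist y x - dist z x| ≤ dist y z := abs_dist_sub_le y z x
    simp only [Set.mem_preimage, hAdef, Set.mem_setOf_eq]
    rw [← hzs]
    linarith
  exact lt_of_le_of_lt (ENNReal.tsum_le_tsum fun n => measure_mono (hsub n)) hFr


set_option linter.unusedSectionVars false

lemma exists_reg_partition (μ : Measure M) [IsProbabilityMeasure μ] {lam : ℝ}
    (hlam : 1 < lam) {ε : ℝ} (hε : 0 < ε) :
    ∃ (k : ℕ) (C : Fin k → Set M), (∀ i, MeasurableSet (C i)) ∧
      Pairwise (Function.onFun Disjoint C) ∧ (⋃ i, C i) = Set.univ ∧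
      (∀ i, LambdaMuRegular μ lam (C i)) ∧ ∀ i, Metric.diam (C i) ≤ ε := by
  -- choose a good radius for each center
  have hchoice : ∀ x : M, ∃ r ∈ Set.Ioo (ε/4) (ε/2), LambdaMuRegular μ lam (Metric.ball x r) :=
    fun x => exists_good_radius μ hlam x (by linarith)
  choose rad hrad hreg using hchoice
  -- finite subcover
  obtain ⟨t, ht⟩ := isCompact_univ.elim_finite_subcover (fun x : M => ball x (ε/4))
    (fun _ => isOpen_ball) (fun y _ => Set.mem_iUnion.2 ⟨y, mem_ball_self (by linarith)⟩)
  set k := t.card with hk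
  set e : Fin k → M := fun i => (t.equivFin.symm i : M) with he
  set B : Fin k → Set M := fun i => ball (e i) (rad (e i)) with hB
  have hcover : (⋃ i, B i) = Set.univ := by
    apply Set.eq_univ_of_univ_subset
    intro y hy
    obtain ⟨x, hxt, hyx⟩ := Set.mem_iUnion₂.1 (ht hy)
    refine Set.mem_iUnion.2 ⟨t.equivFin ⟨x, hxt⟩, ?_⟩
    have hex : e (t.equivFin ⟨x, hxt⟩) = x := by simp [he]
    show y ∈ ball (e (t.equivFin ⟨x, hxt⟩)) (rad (e (t.equivFin ⟨x, hxt⟩)))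
    rw [hex]
    exact ball_subset_ball (le_of_lt (hrad x).1) hyx
  -- extend to ℕ and disjointify
  set B' : ℕ → Set M := fun j => if h : j < k then B ⟨j, h⟩ else ∅ with hB'
  have hB'reg : ∀ j, LambdaMuRegular μ lam (B' j) := by
    intro j
    rw [hB']
    by_cases h : j < k
    · simpa [h] using hreg (e ⟨j, h⟩)
    · simpa [h] using reg_empty
  have hB'meas : ∀ j, MeasurableSet (B' j) := by
    intro j
    by_cases h : j < k
    · simp only [hB', dif_pos h]; exact measurableSet_ball
    · simp only [hB', dif_neg h]; exact MeasurableSet.empty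
  refine ⟨k, fun i => disjointed B' i, ?_, ?_, ?_, ?_, ?_⟩
  · exact fun i => MeasurableSet.disjointed hB'meas i
  · intro i j hij
    exact disjoint_disjointed B' (by simpa using Fin.val_ne_of_ne hij)
  · apply Set.eq_univ_of_univ_subset
    rw [← hcover]
    intro y hy
    obtain ⟨i, hi⟩ := Set.mem_iUnion.1 hy
    have : y ∈ ⋃ n : ℕ, B' n := Set.mem_iUnion.2 ⟨i, by simp [hB', i.isLt, hi]⟩
    rw [← iUnion_disjointed] at this
    obtain ⟨n, hn⟩ := Set.mem_iUnion.1 this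
    have hnk : n < k := by
      by_contra hnk
      have : B' n = ∅ := by simp [hB', hnk]
      exact absurd (this ▸ disjointed_subset B' n hn) (Set.notMem_empty y)
    exact Set.mem_iUnion.2 ⟨⟨n, hnk⟩, hn⟩
  · -- regularity
    intro i
    have hpart : ∀ n : ℕ, LambdaMuRegular μ lam (partialSups B' n) := by
      intro n
      induction n with
      | zero => simpa using hB'reg 0
      | succ n ih => rw [partialSups_add_one]; exact reg_union ih (hB'reg (n+1))
    show LambdaMuRegular μ lam (disjointed B' (i : ℕ))
    cases h : (i : ℕ) with
    | zero => rw [disjointed_zero]; exact hB'reg 0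
    | succ n => rw [disjointed_add_one]; exact reg_diff (hB'reg _) (hpart _)
  · intro i
    have hsub : disjointed B' (i : ℕ) ⊆ B ⟨(i : ℕ), i.isLt⟩ := by
      have h1 := disjointed_subset B' (i : ℕ)
      have h2 : B' (i : ℕ) = B ⟨(i : ℕ), i.isLt⟩ := by
        simp only [hB', dif_pos i.isLt]
      rwa [h2] at h1
    have hbd : Bornology.IsBounded (B ⟨(i : ℕ), i.isLt⟩) := isBounded_ball
    calc Metric.diam (disjointed B' (i : ℕ)) ≤ Metric.diam (B ⟨(i : ℕ), i.isLt⟩) :=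
          diam_mono hsub hbd
      _ ≤ 2 * rad (e ⟨(i : ℕ), i.isLt⟩) := diam_ball (le_of_lt (lt_trans (by linarith) (hrad _).1))
      _ ≤ ε := by linarith [(hrad (e ⟨(i : ℕ), i.isLt⟩)).2]

end Construction

/-- On a compact metric space with a Borel probability measure `μ` and
`λ > 1`, there is an increasing (refining) sequence of finite Borel partitions `P n`, all
of whose atoms are `(λ, μ)`-regular and of diameter at most `2^{-n}`; consequently the
partitions jointly separate points. -/
theorem exists_refining_lambdaMuRegular_partitions
    {M : Type*} [MetricSpace M] [CompactSpace M] [MeasurableSpace M] [BorelSpace M]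
    (μ : Measure M) [IsProbabilityMeasure μ] (lam : ℝ) (hlam : 1 < lam) :
    ∃ (m : ℕ → ℕ) (P : (n : ℕ) → Fin (m n) → Set M),
      (∀ n i, MeasurableSet (P n i)) ∧
      (∀ n, Pairwise (Function.onFun Disjoint (P n))) ∧
      (∀ n, (⋃ i, P n i) = Set.univ) ∧
      (∀ n i, LambdaMuRegular μ lam (P n i)) ∧
      (∀ n i, Metric.diam (P n i) ≤ (2 : ℝ) ^ (-(n : ℤ))) ∧
      (∀ n i, ∃ j, P (n + 1) i ⊆ P n j) ∧
      (∀ x y : M, (∀ n i, x ∈ P n i → y ∈ P n i) → x = y) := by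
  have hQ : ∀ n : ℕ, ∃ (k : ℕ) (C : Fin k → Set M), (∀ i, MeasurableSet (C i)) ∧
      Pairwise (Function.onFun Disjoint C) ∧ (⋃ i, C i) = Set.univ ∧
      (∀ i, LambdaMuRegular μ lam (C i)) ∧ ∀ i, Metric.diam (C i) ≤ (2 : ℝ) ^ (-(n : ℤ)) :=
    fun n => exists_reg_partition μ hlam (by positivity)
  choose k Q hQmeas hQdisj hQunion hQreg hQdiam using hQ
  -- iterated common refinement
  set F : (n : ℕ) → Σ m : ℕ, Fin m → Set M := fun n =>
    Nat.rec ⟨k 0, Q 0⟩ (fun n ih =>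
      ⟨ih.1 * k (n+1), fun j =>
        ih.2 (finProdFinEquiv.symm j).1 ∩ Q (n+1) (finProdFinEquiv.symm j).2⟩) n with hF
  have hF0 : F 0 = ⟨k 0, Q 0⟩ := rfl
  have hFs : ∀ n, F (n+1) = ⟨(F n).1 * k (n+1), fun j =>
      (F n).2 (finProdFinEquiv.symm j).1 ∩ Q (n+1) (finProdFinEquiv.symm j).2⟩ := fun n => rfl
  have hmeas : ∀ n i, MeasurableSet ((F n).2 i) := by
    intro n
    induction n with
    | zero => exact hQmeas 0
    | succ n ih => exact fun i => (ih _).inter (hQmeas (n+1) _)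
  have hdisj : ∀ n, Pairwise (Function.onFun Disjoint ((F n).2)) := by
    intro n
    induction n with
    | zero => exact hQdisj 0
    | succ n ih =>
      intro i j hij
      have hne : finProdFinEquiv.symm i ≠ finProdFinEquiv.symm j :=
        fun h => hij (finProdFinEquiv.symm.injective h)
      by_cases h1 : (finProdFinEquiv.symm i).1 = (finProdFinEquiv.symm j).1
      · have h2 : (finProdFinEquiv.symm i).2 ≠ (finProdFinEquiv.symm j).2 :=
          fun h2 => hne (Prod.ext h1 h2)
        exact Disjoint.mono Set.inter_subset_right Set.inter_subset_right (hQdisj (n+1) h2)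
      · exact Disjoint.mono Set.inter_subset_left Set.inter_subset_left (ih h1)
  have hunion : ∀ n, (⋃ i, (F n).2 i) = Set.univ := by
    intro n
    induction n with
    | zero => exact hQunion 0
    | succ n ih =>
      apply Set.eq_univ_of_univ_subset
      intro y _
      obtain ⟨i, hi⟩ := Set.mem_iUnion.1 (ih ▸ Set.mem_univ y : y ∈ ⋃ i, (F n).2 i)
      obtain ⟨l, hl⟩ := Set.mem_iUnion.1 ((hQunion (n+1)) ▸ Set.mem_univ y : y ∈ ⋃ l, Q (n+1) l)
      refine Set.mem_iUnion.2 ⟨finProdFinEquiv (i, l), ?_⟩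
      show y ∈ (F n).2 (finProdFinEquiv.symm (finProdFinEquiv (i, l))).1 ∩
        Q (n+1) (finProdFinEquiv.symm (finProdFinEquiv (i, l))).2
      rw [Equiv.symm_apply_apply]
      exact ⟨hi, hl⟩
  have hreg : ∀ n i, LambdaMuRegular μ lam ((F n).2 i) := by
    intro n
    induction n with
    | zero => exact hQreg 0
    | succ n ih => exact fun i => reg_inter (ih _) (hQreg (n+1) _)
  have hdiam : ∀ n i, Metric.diam ((F n).2 i) ≤ (2 : ℝ) ^ (-(n : ℤ)) := by
    intro n
    induction n with
    | zero => exact hQdiam 0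
    | succ n _ =>
      intro i
      have hsub : (F (n+1)).2 i ⊆ Q (n+1) (finProdFinEquiv.symm i).2 := Set.inter_subset_right
      have hbd : Bornology.IsBounded (Q (n+1) (finProdFinEquiv.symm i).2) :=
        isCompact_univ.isBounded.subset (Set.subset_univ _)
      exact (Metric.diam_mono hsub hbd).trans (hQdiam (n+1) _)
  refine ⟨fun n => (F n).1, fun n => (F n).2, hmeas, hdisj, hunion, hreg, hdiam,
    fun n i => ⟨(finProdFinEquiv.symm i).1, Set.inter_subset_left⟩, ?_⟩
  intro x y hxy
  have hdist : ∀ n : ℕ, dist x y ≤ (2 : ℝ) ^ (-(n : ℤ)) := by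
    intro n
    obtain ⟨i, hi⟩ := Set.mem_iUnion.1 ((hunion n) ▸ Set.mem_univ x : x ∈ ⋃ i, (F n).2 i)
    have hy : y ∈ (F n).2 i := hxy n i hi
    have hbd : Bornology.IsBounded ((F n).2 i) :=
      isCompact_univ.isBounded.subset (Set.subset_univ _)
    exact (Metric.dist_le_diam_of_mem hbd hi hy).trans (hdiam n i)
  have htend : Filter.Tendsto (fun n : ℕ => (2 : ℝ) ^ (-(n : ℤ))) Filter.atTop (nhds 0) := by
    have h2 : ∀ n : ℕ, (2 : ℝ) ^ (-(n : ℤ)) = (2⁻¹ : ℝ) ^ n := by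
      intro n; rw [zpow_neg, zpow_natCast, inv_pow]
    simp only [h2]
    exact tendsto_pow_atTop_nhds_zero_of_lt_one (by norm_num) (by norm_num)
  exact dist_le_zero.mp (ge_of_tendsto' htend hdist)
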